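/- Let a > 0 and let h : ℝ → ℝ be continuous and bounded. Define F₁(t) = ∫_{τ ∈ (-∞, t]} h(τ) · g_a^1(t - τ) dτ. Then for every t ∈ ℝ, F₁ is differentiable at t with F₁'(t) = a·h(t) - a·F₁(t). -/

import Mathlib

open Real MeasureTheory

/-- Erlang density with shape parameter `i` and rate parameter `a`. -/
noncomputable def erlang (a : ℝ) (i : ℕ) (t : ℝ) : ℝ :=
  a ^ i * t ^ (i - 1) * Real.exp (-a * t) / (Nat.factorial (i - 1))

lemma exp_mul_integrableOn_Iic {a : ℝ} (ha : 0 < a) (u : ℝ) :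
    IntegrableOn (fun τ => Real.exp (a * τ)) (Set.Iic u) := by
  have h1 : Integrable ((Set.Iic (a * u)).indicator Real.exp) :=
    (integrableOn_exp_Iic (a * u)).integrable_indicator measurableSet_Iic
  have h2 := h1.comp_mul_left' (ne_of_gt ha)
  refine (integrable_indicator_iff measurableSet_Iic).mp ?_
  convert h2 using 1
  · rfl
  funext x
  by_cases hx : x ≤ u
  · simp [Set.indicator_apply, hx, (mul_le_mul_iff_right₀ ha).2 hx]
  · have : ¬ a * x ≤ a * u := fun hh => hx ((mul_le_mul_iff_right₀ ha).1 hh)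
    simp [Set.indicator_apply, hx, this]

theorem linear_chain_base (a : ℝ) (ha : 0 < a) (h : ℝ → ℝ)
    (hcont : Continuous h) (hbdd : ∃ M : ℝ, ∀ t : ℝ, |h t| ≤ M)
    (F₁ : ℝ → ℝ)
    (hF₁ : ∀ t : ℝ, F₁ t = ∫ τ in Set.Iic t, h τ * erlang a 1 (t - τ)) :
    ∀ t : ℝ, HasDerivAt F₁ (a * h t - a * F₁ t) t := by
  obtain ⟨M, hM⟩ := hbdd
  set f : ℝ → ℝ := fun τ => h τ * Real.exp (a * τ) with hf_def
  have hfc : Continuous f :=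
    hcont.mul (Real.continuous_exp.comp (continuous_const.mul continuous_id))
  have hfint : ∀ u : ℝ, IntegrableOn f (Set.Iic u) := by
    intro u
    exact (exp_mul_integrableOn_Iic ha u).bdd_mul hcont.aestronglyMeasurable
      (c := M) (Filter.Eventually.of_forall fun x => by simpa [Real.norm_eq_abs] using hM x)
  set G : ℝ → ℝ := fun u => ∫ τ in Set.Iic u, f τ with hG_def
  -- F₁ in terms of G
  have hF₁eq : ∀ u : ℝ, F₁ u = a * Real.exp (-a * u) * G u := by
    intro u
    rw [hF₁ u]
    have hpt : ∀ τ : ℝ, h τ * erlang a 1 (u - τ) = (a * Real.exp (-a * u)) * f τ := by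
      intro τ
      simp only [erlang, pow_one, hf_def]
      rw [show (-a * (u - τ)) = (-a * u) + a * τ by ring, Real.exp_add]
      norm_num
      ring
    simp only [hpt]
    rw [integral_const_mul]
  intro t
  have hle : t - 1 ≤ t := by linarith
  -- derivative of G at t
  have hGderiv : HasDerivAt G (f t) t := by
    have hsub : Set.uIoc (t - 1) t ⊆ Set.Iic t := by
      rw [Set.uIoc_of_le hle]
      exact fun x hx => hx.2
    have hII : IntervalIntegrable f volume (t - 1) t :=
      intervalIntegrable_iff.mpr ((hfint t).mono_set hsub)
    have hright : HasDerivAt (fun u => ∫ x in (t - 1)..u, f x) (f t) t :=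
      intervalIntegral.integral_hasDerivAt_right hII
        hfc.aestronglyMeasurable.stronglyMeasurableAtFilter hfc.continuousAt
    have hlocal : (fun u => G (t - 1) + ∫ x in (t - 1)..u, f x) =ᶠ[nhds t] G := by
      filter_upwards [Ioi_mem_nhds (show t - 1 < t by linarith)] with u hu
      have hu' : t - 1 ≤ u := le_of_lt hu
      rw [intervalIntegral.integral_of_le hu']
      have hunion : Set.Iic (t - 1) ∪ Set.Ioc (t - 1) u = Set.Iic u :=
        Set.Iic_union_Ioc_eq_Iic hu'
      have hdisj : Disjoint (Set.Iic (t - 1)) (Set.Ioc (t - 1) u) := by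
        rw [Set.disjoint_left]
        rintro x hx ⟨hx1, _⟩
        exact absurd hx (not_le.2 hx1)
      have := setIntegral_union (μ := volume) hdisj measurableSet_Ioc
        (hfint (t - 1)) ((hfint u).mono_set (fun x hx => hx.2))
      rw [hunion] at this
      simp only [hG_def]
      rw [this]
    have := ((hasDerivAt_const t (G (t - 1))).add hright).congr_of_eventuallyEq
      hlocal.symm
    simpa using this
  -- derivative of the prefactor
  have hexp : HasDerivAt (fun u : ℝ => a * Real.exp (-a * u))
      (a * (Real.exp (-a * t) * (-a))) t := by
    have h1 : HasDerivAt (fun u : ℝ => -a * u) (-a) t := by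
      simpa using (hasDerivAt_id t).const_mul (-a)
    exact ((Real.hasDerivAt_exp (-a * t)).comp t h1).const_mul a
  have hmul := hexp.mul hGderiv
  have hkey : Real.exp (-a * t) * Real.exp (a * t) = 1 := by
    rw [← Real.exp_add]
    norm_num
  have hFeq : F₁ = fun u => a * Real.exp (-a * u) * G u := funext hF₁eq
  rw [hFeq]
  convert hmul using 1
  have hFt : F₁ t = a * Real.exp (-a * t) * G t := hF₁eq t
  show a * h t - a * (a * Real.exp (-a * t) * G t) = _
  simp only [hf_def]
  linear_combination (-(a * h t)) * hkey
  all_goals rfl
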